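/- Let B ∈ ℝ^{L×L} be symmetric positive definite, let M ∈ ℝ^{L×L} be symmetric, let g₁, …, g_L > 0, fix an index j ∈ {1,…,L}, and for s > 0 let G(s) = diag(g₁,…,g_{j−1}, s, g_{j+1},…,g_L). Then the function F(s) = −(1/2) log det(G(s) B G(s)) − (1/2) tr((G(s) B G(s))⁻¹ M) is differentiable on (0, ∞) with derivative F′(s) = −1/s + A/s³ + T/s², where A = (B⁻¹)_{jj} · M_{jj} and T = ∑_{l ≠ j} (B⁻¹)_{jl} · g_l⁻¹ · M_{lj} (the E-step gradient computation ∂Q/∂√γ_{ij} used to derive the variance updates). -/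

import Mathlib

open Matrix

/-- The E-step gradient computation `∂Q/∂√γ_{ij}`: with `G(s)` the diagonal matrix whose
`j`-th diagonal entry is `s` and the others are `g_l > 0`, the function
`F(s) = −(1/2) log det(G(s) B G(s)) − (1/2) tr((G(s) B G(s))⁻¹ M)` is differentiable on
`(0,∞)` with derivative `F'(s) = −1/s + A/s³ + T/s²`, where `A = (B⁻¹)_{jj} M_{jj}` and
`T = ∑_{l ≠ j} (B⁻¹)_{jl} g_l⁻¹ M_{lj}`. -/
theorem stmt_14 (L : ℕ) (B : Matrix (Fin L) (Fin L) ℝ) (hB : B.PosDef)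
    (Mm : Matrix (Fin L) (Fin L) ℝ) (hMm : Mm.IsSymm)
    (g : Fin L → ℝ) (hg : ∀ l, 0 < g l) (j : Fin L) :
    let G : ℝ → Matrix (Fin L) (Fin L) ℝ :=
      fun s => Matrix.diagonal (Function.update g j s)
    let F : ℝ → ℝ := fun s =>
      -(1 / 2) * Real.log ((G s * B * G s).det)
        - (1 / 2) * ((G s * B * G s)⁻¹ * Mm).trace
    let A : ℝ := B⁻¹ j j * Mm j j
    let T : ℝ := ∑ l ∈ Finset.univ.erase j, B⁻¹ j l * (g l)⁻¹ * Mm l j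
    ∀ s : ℝ, 0 < s → HasDerivAt F (-1 / s + A / s ^ 3 + T / s ^ 2) s := by
  intro G F A T s hs
  -- constants
  set P : ℝ := ∏ l ∈ Finset.univ.erase j, g l with hP
  have hPpos : 0 < P := Finset.prod_pos fun l _ => hg l
  set D : ℝ := ∑ k ∈ Finset.univ.erase j, ∑ l ∈ Finset.univ.erase j,
      (g k)⁻¹ * B⁻¹ k l * ((g l)⁻¹ * Mm l k) with hD
  set K : ℝ := -(1/2) * Real.log (B.det * P^2) - (1/2) * D with hK
  have hBinv_symm : ∀ k l, B⁻¹ k l = B⁻¹ l k := by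
    intro k l
    have := hB.isHermitian.inv
    simpa using (congrArg (fun X => X l k) this.symm).symm
  have hM_symm : ∀ k l, Mm k l = Mm l k := fun k l => (hMm.apply k l).symm
  -- the nice formula on (0,∞)
  have key : ∀ x : ℝ, 0 < x →
      F x = K - Real.log x - (1/2 * A) * (x⁻¹ * x⁻¹) - T * x⁻¹ := by
    intro x hx
    set u : Fin L → ℝ := fun l => (Function.update g j x l)⁻¹ with hu
    have hupd : ∀ l, Function.update g j x l ≠ 0 := by
      intro l
      rcases eq_or_ne l j with rfl | h
      · simpa using hx.ne'
      · rw [Function.update_of_ne h]; exact (hg l).ne'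
    have hGinv : (G x)⁻¹ = Matrix.diagonal u := by
      apply Matrix.inv_eq_right_inv
      rw [Matrix.diagonal_mul_diagonal]
      have h1 : (fun i => Function.update g j x i * u i) = fun _ => (1:ℝ) :=
        funext fun l => mul_inv_cancel₀ (hupd l)
      rw [h1]
      exact Matrix.diagonal_one
    have huj : u j = x⁻¹ := by simp [hu]
    have hul : ∀ l, l ≠ j → u l = (g l)⁻¹ := by
      intro l h; simp [hu, Function.update_of_ne h]
    -- determinant part
    have hdet : (G x * B * G x).det = (B.det * P^2) * x^2 := by
      have hpd : (∏ l, Function.update g j x l) = x * P := by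
        rw [← Finset.mul_prod_erase Finset.univ _ (Finset.mem_univ j)]
        simp only [Function.update_self]
        congr 1
        exact Finset.prod_congr rfl fun l hl => Function.update_of_ne (Finset.ne_of_mem_erase hl) _ _
      simp only [G, Matrix.det_mul, Matrix.det_diagonal, hpd]
      ring
    have hlogdet : Real.log ((G x * B * G x).det)
        = Real.log (B.det * P^2) + 2 * Real.log x := by
      rw [hdet, Real.log_mul (mul_pos hB.det_pos (pow_pos hPpos 2)).ne' (by positivity), Real.log_pow]
      push_cast; ring
    -- inverse part
    have hinv : (G x * B * G x)⁻¹ = Matrix.diagonal u * B⁻¹ * Matrix.diagonal u := by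
      rw [Matrix.mul_inv_rev, Matrix.mul_inv_rev, hGinv, Matrix.mul_assoc]
    have htr : ((G x * B * G x)⁻¹ * Mm).trace
        = A * (x⁻¹ * x⁻¹) + T * x⁻¹ + (T * x⁻¹ + D) := by
      rw [hinv]
      have hXentry : ∀ k l, (Matrix.diagonal u * B⁻¹ * Matrix.diagonal u) k l
          = u k * B⁻¹ k l * u l := by
        intro k l
        rw [Matrix.mul_diagonal, Matrix.diagonal_mul]
      have htr2 : ((Matrix.diagonal u * B⁻¹ * Matrix.diagonal u) * Mm).trace
          = ∑ k, ∑ l, u k * B⁻¹ k l * u l * Mm l k := by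
        rw [Matrix.trace]
        refine Finset.sum_congr rfl fun k _ => ?_
        rw [Matrix.diag_apply, Matrix.mul_apply]
        exact Finset.sum_congr rfl fun l _ => by rw [hXentry]
      rw [htr2]
      rw [← Finset.add_sum_erase _ _ (Finset.mem_univ j)]
      have h1 : ∑ l, u j * B⁻¹ j l * u l * Mm l j
          = A * (x⁻¹ * x⁻¹) + T * x⁻¹ := by
        rw [← Finset.add_sum_erase _ _ (Finset.mem_univ j), huj]
        congr 1
        · simp [A]; ring
        · rw [Finset.sum_mul]
          refine Finset.sum_congr rfl fun l hl => ?_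
          rw [hul l (Finset.ne_of_mem_erase hl)]
          ring
      have h2 : ∑ k ∈ Finset.univ.erase j, ∑ l, u k * B⁻¹ k l * u l * Mm l k
          = T * x⁻¹ + D := by
        have : ∀ k ∈ Finset.univ.erase j, ∑ l, u k * B⁻¹ k l * u l * Mm l k
            = B⁻¹ j k * (g k)⁻¹ * Mm k j * x⁻¹
              + ∑ l ∈ Finset.univ.erase j, (g k)⁻¹ * B⁻¹ k l * ((g l)⁻¹ * Mm l k) := by
          intro k hk
          have hkj := Finset.ne_of_mem_erase hk
          rw [← Finset.add_sum_erase _ _ (Finset.mem_univ j), huj, hul k hkj]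
          congr 1
          · rw [hBinv_symm k j, hM_symm j k]; ring
          · refine Finset.sum_congr rfl fun l hl => ?_
            rw [hul l (Finset.ne_of_mem_erase hl)]; ring
        rw [Finset.sum_congr rfl this, Finset.sum_add_distrib]
        congr 1
        rw [show T * x⁻¹ = ∑ l ∈ Finset.univ.erase j, B⁻¹ j l * (g l)⁻¹ * Mm l j * x⁻¹ from Finset.sum_mul _ _ _]
      rw [h1, h2]
    -- put together
    show -(1 / 2) * Real.log ((G x * B * G x).det)
        - (1 / 2) * ((G x * B * G x)⁻¹ * Mm).trace
      = K - Real.log x - (1/2 * A) * (x⁻¹ * x⁻¹) - T * x⁻¹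
    rw [hlogdet, htr, hK]
    ring
  -- derivative of the nice formula
  have hlog : HasDerivAt Real.log s⁻¹ s := Real.hasDerivAt_log hs.ne'
  have hinv : HasDerivAt (fun x : ℝ => x⁻¹) (-(s^2)⁻¹) s := hasDerivAt_inv hs.ne'
  have hsq : HasDerivAt (fun x : ℝ => x⁻¹ * x⁻¹)
      (-(s^2)⁻¹ * s⁻¹ + s⁻¹ * -(s^2)⁻¹) s := hinv.mul hinv
  have hΦ : HasDerivAt (fun x => K - Real.log x - (1/2 * A) * (x⁻¹ * x⁻¹) - T * x⁻¹)
      (-1 / s + A / s ^ 3 + T / s ^ 2) s := by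
    have := (((hasDerivAt_const s K).sub hlog).sub (hsq.const_mul (1/2 * A))).sub
      (hinv.const_mul T)
    refine this.congr_deriv ?_
    field_simp
    ring
  refine hΦ.congr_of_eventuallyEq ?_
  filter_upwards [Ioi_mem_nhds hs] with x hx
  exact key x hx
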